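/- Let m = 2^p − 1 with p ≥ 1. Then in Q_m, (x_1 + x_2 + ⋯ + x_m)^m = ∏_{i=0}^{p−1} ( x_{2^i}^{2^i} + x_{2^i+1}^{2^i} + ⋯ + x_m^{2^i} ), i.e. in the i-th factor the sum extends over x_j^{2^i} for 2^i ≤ j ≤ m. -/

import Mathlib

open MvPolynomial Finset
open Fin.NatCast

noncomputable section

/-- The defining ideal of `Q_m`: generated by `x_1^2` and `x_i^2 - x_{i-1} x_i` for `2 ≤ i ≤ m`
(variables are 1-based; `X ((i-1 : ℕ) : Fin m)` is `x_i`). -/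
def Qrel (m : ℕ) [NeZero m] : Ideal (MvPolynomial (Fin m) (ZMod 2)) :=
  Ideal.span ((fun i : ℕ =>
      X ((i - 1 : ℕ) : Fin m) ^ 2 -
        (if i = 1 then 0 else X ((i - 2 : ℕ) : Fin m) * X ((i - 1 : ℕ) : Fin m))) ''
    Set.Icc 1 m)

/-- The ring `Q_m`. -/
abbrev Qring (m : ℕ) [NeZero m] : Type :=
  MvPolynomial (Fin m) (ZMod 2) ⧸ Qrel m

/-- The image of `x_i` (1-based, for `1 ≤ i ≤ m`) in `Q_m`. -/
def xQ (m : ℕ) [NeZero m] (i : ℕ) : Qring m :=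
  Ideal.Quotient.mk (Qrel m) (X ((i - 1 : ℕ) : Fin m))

lemma xQ_sq (m : ℕ) [NeZero m] {i : ℕ} (h1 : 1 ≤ i) (h2 : i ≤ m) :
    xQ m i ^ 2 = if i = 1 then 0 else xQ m (i - 1) * xQ m i := by
  have hmem : (X ((i - 1 : ℕ) : Fin m) ^ 2 -
      (if i = 1 then 0 else X ((i - 2 : ℕ) : Fin m) * X ((i - 1 : ℕ) : Fin m))) ∈ Qrel m :=
    Ideal.subset_span ⟨i, Set.mem_Icc.2 ⟨h1, h2⟩, rfl⟩
  have h0 := (Ideal.Quotient.eq_zero_iff_mem).2 hmem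
  rw [map_sub, sub_eq_zero] at h0
  unfold xQ
  rw [← map_pow, h0]
  split_ifs with h
  · simp
  · rw [map_mul]
    rfl

lemma xQ_mul_prod (m : ℕ) [NeZero m] (a : ℕ) (ha : 1 ≤ a) :
    ∀ j, a ≤ j → j ≤ m →
      xQ m j * ∏ k ∈ Icc a j, xQ m k =
        if a = 1 then 0 else ∏ k ∈ Icc (a - 1) j, xQ m k := by
  refine Nat.le_induction ?_ ?_
  · intro hm
    rw [Finset.Icc_self, Finset.prod_singleton, ← sq, xQ_sq m ha hm]
    split_ifs with h
    · rfl
    · have hstep : a = (a - 1) + 1 := by omega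
      rw [hstep, Finset.prod_Icc_succ_top (by omega), Nat.add_sub_cancel,
        Finset.Icc_self, Finset.prod_singleton]
  · intro j hj ih hjm
    have hj' : j ≤ m := by omega
    have hsq := xQ_sq m (i := j + 1) (by omega) hjm
    rw [if_neg (by omega)] at hsq
    have hj1 : (j + 1) - 1 = j := by omega
    rw [hj1] at hsq
    calc xQ m (j + 1) * ∏ k ∈ Icc a (j + 1), xQ m k
        = xQ m (j + 1) * ((∏ k ∈ Icc a j, xQ m k) * xQ m (j + 1)) := by
          rw [Finset.prod_Icc_succ_top (by omega)]
      _ = (∏ k ∈ Icc a j, xQ m k) * xQ m (j + 1) ^ 2 := by ring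
      _ = (∏ k ∈ Icc a j, xQ m k) * (xQ m j * xQ m (j + 1)) := by rw [hsq]
      _ = (xQ m j * ∏ k ∈ Icc a j, xQ m k) * xQ m (j + 1) := by ring
      _ = (if a = 1 then 0 else ∏ k ∈ Icc (a - 1) j, xQ m k) * xQ m (j + 1) := by
          rw [ih hj']
      _ = if a = 1 then 0 else ∏ k ∈ Icc (a - 1) (j + 1), xQ m k := by
          split_ifs with h
          · rw [zero_mul]
          · rw [Finset.prod_Icc_succ_top (by omega)]

lemma xQ_pow (m : ℕ) [NeZero m] {j : ℕ} (hj1 : 1 ≤ j) (hjm : j ≤ m) :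
    ∀ n, 1 ≤ n → n ≤ j → xQ m j ^ n = ∏ k ∈ Icc (j - n + 1) j, xQ m k := by
  refine Nat.le_induction ?_ ?_
  · intro _
    have : j - 1 + 1 = j := by omega
    rw [this, pow_one, Finset.Icc_self, Finset.prod_singleton]
  · intro n hn ih hnj
    have hnj' : n ≤ j := by omega
    rw [pow_succ, mul_comm, ih hnj']
    rw [xQ_mul_prod m (j - n + 1) (by omega) j (by omega) hjm]
    rw [if_neg (by omega)]
    congr 1
    congr 1
    omega

lemma xQ_pow_eq_zero (m : ℕ) [NeZero m] {j n : ℕ} (hj1 : 1 ≤ j) (hjm : j ≤ m)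
    (hn : j < n) : xQ m j ^ n = 0 := by
  have h1 : xQ m j ^ (j + 1) = 0 := by
    rw [pow_succ, mul_comm, xQ_pow m hj1 hjm j hj1 le_rfl]
    have : j - j + 1 = 1 := by omega
    rw [this, xQ_mul_prod m 1 le_rfl j hj1 hjm, if_pos rfl]
  obtain ⟨k, rfl⟩ : ∃ k, n = (j + 1) + k := ⟨n - (j + 1), by omega⟩
  rw [pow_add, h1, zero_mul]

lemma Qring_two_eq_zero (m : ℕ) [NeZero m] : (2 : Qring m) = 0 := by
  have hpoly : (1 + 1 : MvPolynomial (Fin m) (ZMod 2)) = 0 := by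
    rw [← C_1, ← C_add, show ((1 : ZMod 2) + 1) = 0 from rfl, C_0]
  have h : (2 : Qring m) =
      Ideal.Quotient.mk (Qrel m) 1 + Ideal.Quotient.mk (Qrel m) 1 := by
    rw [map_one]
    norm_num
  rw [h, ← map_add, hpoly, map_zero]

lemma sq_sum {R : Type*} [CommRing R] (h2 : (2 : R) = 0) {ι : Type*} (s : Finset ι)
    (f : ι → R) : (∑ i ∈ s, f i) ^ 2 = ∑ i ∈ s, f i ^ 2 := by
  induction s using Finset.cons_induction with
  | empty => simp
  | cons a s ha ih =>
      rw [Finset.sum_cons, Finset.sum_cons, add_sq, ih, h2]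
      ring

lemma sum_pow_two_pow {R : Type*} [CommRing R] (h2 : (2 : R) = 0) {ι : Type*}
    (s : Finset ι) (f : ι → R) (n : ℕ) :
    (∑ i ∈ s, f i) ^ (2 ^ n) = ∑ i ∈ s, f i ^ (2 ^ n) := by
  induction n with
  | zero => simp
  | succ n ih =>
      rw [pow_succ, pow_mul, ih, sq_sum h2]
      refine Finset.sum_congr rfl fun i _ => ?_
      rw [← pow_mul, ← pow_succ]

/-- Equation (2.6): for `m = 2^p - 1` with `p ≥ 1`, in `Q_m`:
`(x_1 + ⋯ + x_m)^m = ∏_{i=0}^{p-1} (x_{2^i}^{2^i} + ⋯ + x_m^{2^i})`. -/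
theorem statement8 (p : ℕ) (hp : 1 ≤ p) (m : ℕ) [NeZero m] (hm : m = 2 ^ p - 1) :
    (∑ i ∈ Finset.Icc 1 m, xQ m i) ^ m =
      ∏ i ∈ Finset.range p, (∑ j ∈ Finset.Icc (2 ^ i) m, xQ m j ^ (2 ^ i)) := by
  have h2 : (2 : Qring m) = 0 := Qring_two_eq_zero m
  have hgeom : ∀ q : ℕ, ∑ i ∈ Finset.range q, 2 ^ i = 2 ^ q - 1 := by
    intro q
    induction q with
    | zero => simp
    | succ q ih =>
        rw [Finset.sum_range_succ, ih, pow_succ]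
        have h1 : 1 ≤ 2 ^ q := Nat.one_le_two_pow
        omega
  have hmsum : m = ∑ i ∈ Finset.range p, 2 ^ i := by rw [hgeom, ← hm]
  calc (∑ i ∈ Finset.Icc 1 m, xQ m i) ^ m
      = ∏ i ∈ Finset.range p, (∑ j ∈ Finset.Icc 1 m, xQ m j) ^ (2 ^ i) := by
        rw [Finset.prod_pow_eq_pow_sum, ← hmsum]
    _ = ∏ i ∈ Finset.range p, (∑ j ∈ Finset.Icc (2 ^ i) m, xQ m j ^ (2 ^ i)) := by
        refine Finset.prod_congr rfl fun i _ => ?_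
        rw [sum_pow_two_pow h2]
        refine (Finset.sum_subset (Finset.Icc_subset_Icc_left Nat.one_le_two_pow) ?_).symm
        intro j hj hj2
        simp only [Finset.mem_Icc] at hj hj2
        exact xQ_pow_eq_zero m hj.1 hj.2 (by omega)
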